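/- For every ℓ ≥ 1 and every n ≥ 0, the sequences defined by the mex recursion satisfy a_{n+1} - a_n ∈ {1, 2} and b_{n+1} - b_n ∈ {2, 3}; in particular b_{n+1} - b_n = (a_{n+1} - a_n) + 1. -/
import Mathlib


/-- The minimum excluded value of a set of natural numbers. -/
noncomputable def mex (S : Set ℕ) : ℕ := sInf {m : ℕ | m ∉ S}

/-- `MexSeq ℓ a b` says that `a`, `b` are the sequences defined by
    `a 0 = ℓ+1`, `b 0 = 2ℓ+2`, and for `n ≥ 1`:
    `a n = mex({a i, b i : i < n} ∪ {0,…,ℓ})`, `b n = a n + n + ℓ + 1`. -/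
def MexSeq (ℓ : ℕ) (a b : ℕ → ℕ) : Prop :=
  a 0 = ℓ + 1 ∧ b 0 = 2 * ℓ + 2 ∧
  (∀ n : ℕ, 1 ≤ n →
    a n = mex ({m : ℕ | ∃ i < n, m = a i ∨ m = b i} ∪ {m : ℕ | m ≤ ℓ})) ∧
  (∀ n : ℕ, 1 ≤ n → b n = a n + n + ℓ + 1)

theorem mexSeq_gaps (ℓ : ℕ) (hℓ : 1 ≤ ℓ) (a b : ℕ → ℕ)
    (hab : MexSeq ℓ a b) :
    ∀ n : ℕ,
      (a (n + 1) - a n = 1 ∨ a (n + 1) - a n = 2) ∧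
      (b (n + 1) - b n = 2 ∨ b (n + 1) - b n = 3) ∧
      b (n + 1) - b n = (a (n + 1) - a n) + 1 := by
  obtain ⟨ha0, hb0, hA, hB⟩ := hab
  have hb : ∀ n, b n = a n + n + ℓ + 1 := by
    intro n
    match n with
    | 0 => omega
    | k + 1 => exact hB _ (by omega)
  have key : ∀ n, a (n + 1) = a n + 1 ∨ a (n + 1) = a n + 2 := by
    intro n
    induction n using Nat.strong_induction_on with
    | _ n ih =>
    have step : ∀ m, m < n → a m < a (m + 1) := fun m hm => by
      rcases ih m hm with h | h <;> omega
    have mono : ∀ j, j ≤ n → ∀ i, i ≤ j → a i ≤ a j := by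
      intro j hj
      induction j with
      | zero => intro i hi; rw [Nat.le_zero.mp hi]
      | succ k ihk =>
        intro i hi
        rcases Nat.eq_or_lt_of_le hi with h | h
        · rw [h]
        · have h1 := ihk (by omega) i (by omega)
          have h2 := step k (by omega)
          omega
    set S : Set ℕ := {m : ℕ | ∃ i < n + 1, m = a i ∨ m = b i} ∪ {m : ℕ | m ≤ ℓ} with hS
    have haS : a n ∈ S := Or.inl ⟨n, by omega, Or.inl rfl⟩
    have hanl : ℓ + 1 ≤ a n := by
      have := mono n le_rfl 0 (Nat.zero_le _); omega
    have low : ∀ k, k ≤ a n → k ∈ S := by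
      intro k hk
      by_cases hkl : k ≤ ℓ
      · exact Or.inr hkl
      rcases Nat.eq_or_lt_of_le hk with h | h
      · rw [h]; exact haS
      rcases Nat.eq_zero_or_pos n with hn | hn
      · exfalso; rw [hn] at h; omega
      · by_contra hkS
        have hkSn : k ∉ ({m : ℕ | ∃ i < n, m = a i ∨ m = b i} ∪ {m : ℕ | m ≤ ℓ} : Set ℕ) := by
          intro hmem
          apply hkS
          rcases hmem with ⟨i, hi, hi'⟩ | hm
          · exact Or.inl ⟨i, by omega, hi'⟩
          · exact Or.inr hm
        have hle : sInf {m : ℕ | m ∉ ({m : ℕ | ∃ i < n, m = a i ∨ m = b i} ∪ {m : ℕ | m ≤ ℓ} : Set ℕ)} ≤ k :=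
          Nat.sInf_le hkSn
        have hAn := hA n hn
        unfold mex at hAn
        omega
    have bval : ∀ c, a n < c → c ∈ S → ∃ i, i ≤ n ∧ c = b i := by
      intro c hc hcS
      rcases hcS with ⟨i, hi, h | h⟩ | hm
      · exfalso; have := mono n le_rfl i (by omega); omega
      · exact ⟨i, by omega, h⟩
      · exfalso; simp only [Set.mem_setOf_eq] at hm; omega
    have notboth : ¬((a n + 1) ∈ S ∧ (a n + 2) ∈ S) := by
      rintro ⟨h1, h2⟩
      obtain ⟨i, hi, hbi⟩ := bval _ (by omega) h1
      obtain ⟨j, hj, hbj⟩ := bval _ (by omega) h2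
      have bgap : ∀ p q, p < q → q ≤ n → b p + 2 ≤ b q := by
        intro p q hpq hq
        have h1 := mono q hq (p + 1) (by omega)
        have h2 := step p (by omega)
        have h3 := hb p
        have h4 := hb q
        omega
      rcases Nat.lt_trichotomy i j with h | h | h
      · have := bgap i j h hj; omega
      · subst h; omega
      · have := bgap j i h hi; omega
    have hAn1 := hA (n + 1) (by omega)
    unfold mex at hAn1
    rw [← hS] at hAn1
    by_cases h1 : (a n + 1) ∈ S
    · have h2 : (a n + 2) ∉ S := fun h => notboth ⟨h1, h⟩
      have hne : Set.Nonempty {m : ℕ | m ∉ S} := ⟨_, h2⟩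
      have hmem := Nat.sInf_mem hne
      have hub : sInf {m : ℕ | m ∉ S} ≤ a n + 2 := Nat.sInf_le h2
      have hlb : a n + 1 ≤ sInf {m : ℕ | m ∉ S} := by
        by_contra hlt
        push_neg at hlt
        exact hmem (low _ (by omega))
      have hne1 : sInf {m : ℕ | m ∉ S} ≠ a n + 1 := by
        intro h; rw [h] at hmem; exact hmem h1
      right; omega
    · have hub : sInf {m : ℕ | m ∉ S} ≤ a n + 1 := Nat.sInf_le h1
      have hne : Set.Nonempty {m : ℕ | m ∉ S} := ⟨_, h1⟩
      have hmem := Nat.sInf_mem hne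
      have hlb : a n + 1 ≤ sInf {m : ℕ | m ∉ S} := by
        by_contra hlt
        push_neg at hlt
        exact hmem (low _ (by omega))
      left; omega
  intro n
  have h := key n
  have h1 := hb n
  have h2 := hb (n + 1)
  omega
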